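/- The operators in End(V^⊗n), dim V = 2 (or any d ≥ 2), induced by the identity permutation together with all transpositions (i,j) with 1 ≤ i < j ≤ n, are linearly independent. -/

import Mathlib

/-- The operator on `V^⊗n` (here realized as `(Fin n → Fin d) → ℂ`, `dim V = d`)
induced by a permutation `σ ∈ Sₙ` permuting the tensor factors. -/
def permOp (d n : ℕ) (σ : Equiv.Perm (Fin n)) :
    Module.End ℂ ((Fin n → Fin d) → ℂ) where
  toFun f := fun x => f (x ∘ σ)
  map_add' _ _ := rfl
  map_smul' _ _ := rfl

/-- Key combinatorial lemma: with `i < j`, `k < l`, `a ≠ b`,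
the indicator configurations coincide iff the pairs coincide. -/
lemma swap_indicator_eq {d n : ℕ} {a b : Fin d} (hab : a ≠ b)
    {i j k l : Fin n} (hij : i < j) (hkl : k < l) :
    ((fun t => if t = j then b else a) ∘ (Equiv.swap k l) =
      (fun t => if t = i then b else a)) ↔ (k = i ∧ l = j) := by
  constructor
  · intro h
    have h' : ∀ t : Fin n, (if Equiv.swap k l t = j then b else a) =
        (if t = i then b else a) := fun t => congrFun h t
    have hji : Equiv.swap k l j = i := by
      have := h' (Equiv.swap k l j)
      simp only [Equiv.swap_apply_self, if_pos rfl] at this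
      by_contra hne
      rw [if_neg hne] at this
      exact hab this.symm
    rw [Equiv.swap_apply_def] at hji
    by_cases h1 : j = k
    · rw [if_pos h1] at hji
      exfalso; subst hji h1; exact absurd hij (not_lt.2 hkl.le)
    · rw [if_neg h1] at hji
      by_cases h2 : j = l
      · rw [if_pos h2] at hji
        exact ⟨hji, h2.symm⟩
      · rw [if_neg h2] at hji
        exact absurd hji.symm (ne_of_lt hij)
  · rintro ⟨rfl, rfl⟩
    funext t
    simp only [Function.comp_apply]
    congr 1
    rw [eq_iff_iff]
    constructor
    · intro h
      have : t = Equiv.swap k l l := (Equiv.apply_eq_iff_eq_symm_apply _).1 h |>.trans (by simp)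
      simpa using this
    · rintro rfl; simp

/-- For `dim V = d ≥ 2`, the operators on `V^⊗n` induced by the identity together with
all transpositions `(i,j)`, `i < j`, are linearly independent. -/
theorem one_and_transpositions_linearIndependent (d n : ℕ) (hd : 2 ≤ d) :
    LinearIndependent ℂ
      (fun o : Option {p : Fin n × Fin n // p.1 < p.2} =>
        match o with
        | none => (1 : Module.End ℂ ((Fin n → Fin d) → ℂ))
        | some p => permOp d n (Equiv.swap p.1.1 p.1.2)) := by
  have ha : (0:ℕ) < d := by omega
  set a : Fin d := ⟨0, ha⟩ with ha'
  set b : Fin d := ⟨1, hd⟩ with hb'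
  have hab : a ≠ b := by simp [ha', hb', Fin.ext_iff]
  rw [Fintype.linearIndependent_iff]
  intro g hg
  have key : ∀ (f : (Fin n → Fin d) → ℂ) (x : Fin n → Fin d),
      (∑ o : Option {p : Fin n × Fin n // p.1 < p.2}, g o *
        ((match o with
          | none => (1 : Module.End ℂ ((Fin n → Fin d) → ℂ))
          | some p => permOp d n (Equiv.swap p.1.1 p.1.2)) f x)) = 0 := by
    intro f x
    have h1 := congrFun (LinearMap.congr_fun hg f) x
    simpa [LinearMap.sum_apply, Finset.sum_apply, smul_eq_mul] using h1
  have hsome : ∀ p : {p : Fin n × Fin n // p.1 < p.2}, g (some p) = 0 := by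
    rintro ⟨⟨i, j⟩, hij⟩
    set y : Fin n → Fin d := fun t => if t = i then b else a with hy
    set x : Fin n → Fin d := fun t => if t = j then b else a with hx
    set f : (Fin n → Fin d) → ℂ := fun z => if z = y then 1 else 0 with hf
    have h := key f x
    rw [Finset.sum_eq_single (some ⟨(i, j), hij⟩)] at h
    · have hterm : f (x ∘ Equiv.swap i j) = 1 := by
        rw [hf]
        exact if_pos ((swap_indicator_eq hab hij hij).2 ⟨rfl, rfl⟩)
      simpa [permOp, hterm] using h
    · rintro o - hne
      match o with
      | none =>
        have hxy : x ≠ y := by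
          intro hxe
          have := congrFun hxe i
          simp only [hx, hy, if_pos rfl, if_neg (ne_of_lt hij)] at this
          exact hab this
        simp [hf, hxy]
      | some ⟨⟨k, l⟩, hkl⟩ =>
        have hne2 : ¬(k = i ∧ l = j) := by
          rintro ⟨rfl, rfl⟩; exact hne rfl
        have : x ∘ Equiv.swap k l ≠ y := by
          intro hce
          exact hne2 ((swap_indicator_eq hab hij hkl).1 hce)
        simp [permOp, hf, this]
    · intro hmem
      exact absurd (Finset.mem_univ _) hmem
  have hnone : g none = 0 := by
    set x : Fin n → Fin d := fun _ => a with hx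
    set f : (Fin n → Fin d) → ℂ := fun z => if z = x then 1 else 0 with hf
    have h := key f x
    rw [Fintype.sum_option] at h
    have hz : (∑ p : {p : Fin n × Fin n // p.1 < p.2}, g (some p) *
        ((permOp d n (Equiv.swap p.1.1 p.1.2)) f x)) = 0 := by
      apply Finset.sum_eq_zero
      intro p _
      rw [hsome p, zero_mul]
    simp only [hz, add_zero] at h
    simpa [hf] using h
  intro o
  match o with
  | none => exact hnone
  | some p => exact hsome p
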